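/- Counting cyclic equilateral polygons: let n = 2k+1 be odd. For each 0 ≤ p ≤ k, the number N^p_n of combinatorial types of cyclic equilateral n-gons (determined by choosing a set of i negatively oriented edges among n, i ≤ p, and a winding/orientation datum) with 2e - 2ω - 2 = 2p equals Σ_{0 ≤ i ≤ p} C(n, i). In particular Σ_{p=0}^{k} N^p_n with multiplicity-two counting of orientations equals twice the total number of critical points, and N^p_n = Σ_{0 ≤ i ≤ p} C(n, i) matches the Betti number β^{2p} of the decorated moduli space. -/

import Mathlib

/-- The Morse index of a combinatorial type of cyclic equilateral `(2k+1)`-gon,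
given by the set `E` of negatively oriented edges and the winding number `ω`
(for `ω < 0` the mirror convention is used): `μ = 2e - 2ω - 2` with `e = n - |E|`
positive edges for `ω > 0`, and the Poincaré-dual value for `ω < 0`. -/
def morseIndexOfType (n : ℕ) (E : Finset (Fin n)) (ω : ℤ) : ℤ :=
  if 0 < ω then 2 * ((n : ℤ) - E.card) - 2 * ω - 2 else 2 * (E.card : ℤ) - 2 * ω - 2

open Classical in
/-- Counting cyclic equilateral polygons: for odd `n = 2k+1` and `p < k`, the number
of combinatorial types (a set `E` of negatively oriented edges together with an
admissible winding number `ω`, `1 ≤ |ω| ≤ k - |E|`) whose Morse index `2e - 2ω - 2`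
equals `2p` is `N^p_n = Σ_{0 ≤ i ≤ p} C(n, i)`. -/
theorem count_cyclic_equilateral_polygons (k p : ℕ) (hk : 1 ≤ k) (hp : p < k) :
    ((Finset.univ ×ˢ Finset.Icc (-(k : ℤ)) (k : ℤ)).filter
        (fun Eω : Finset (Fin (2 * k + 1)) × ℤ =>
          1 ≤ |Eω.2| ∧ |Eω.2| ≤ (k : ℤ) - Eω.1.card ∧
            morseIndexOfType (2 * k + 1) Eω.1 Eω.2 = 2 * p)).card
      = ∑ i ∈ Finset.range (p + 1), Nat.choose (2 * k + 1) i := by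
  classical
  have hinj : Function.Injective
      (fun E : Finset (Fin (2 * k + 1)) => (E, (E.card : ℤ) - 1 - p)) := by
    intro a b h
    simpa using congrArg Prod.fst h
  have hset : ((Finset.univ ×ˢ Finset.Icc (-(k : ℤ)) (k : ℤ)).filter
        (fun Eω : Finset (Fin (2 * k + 1)) × ℤ =>
          1 ≤ |Eω.2| ∧ |Eω.2| ≤ (k : ℤ) - Eω.1.card ∧
            morseIndexOfType (2 * k + 1) Eω.1 Eω.2 = 2 * p))
      = (Finset.univ.filter (fun E : Finset (Fin (2 * k + 1)) => E.card ≤ p)).image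
          (fun E => (E, (E.card : ℤ) - 1 - p)) := by
    ext ⟨E, ω⟩
    simp only [Finset.mem_filter, Finset.mem_image, Finset.mem_product, Finset.mem_univ,
      Finset.mem_Icc, true_and, Prod.mk.injEq]
    simp only [morseIndexOfType]
    constructor
    · rintro ⟨⟨h1, h2⟩, h3, h4, h5⟩
      refine ⟨E, ?_, rfl, ?_⟩
      · rcases le_or_gt ω 0 with hw | hw
        · rw [abs_of_nonpos hw] at h3 h4
          rw [if_neg (by omega)] at h5
          omega
        · rw [abs_of_pos hw] at h3 h4
          rw [if_pos hw] at h5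
          push_cast at h5
          omega
      · rcases le_or_gt ω 0 with hw | hw
        · rw [abs_of_nonpos hw] at h3 h4
          rw [if_neg (by omega)] at h5
          omega
        · rw [abs_of_pos hw] at h3 h4
          rw [if_pos hw] at h5
          push_cast at h5
          omega
    · rintro ⟨F, hF, rfl, rfl⟩
      have h0 : (F.card : ℤ) - 1 - p ≤ -1 := by omega
      rw [abs_of_nonpos (by omega), if_neg (by omega)]
      refine ⟨⟨by omega, by omega⟩, by omega, by omega, by ring⟩
  rw [hset, Finset.card_image_of_injective _ hinj,
    Finset.card_eq_sum_card_fiberwise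
      (f := fun E : Finset (Fin (2 * k + 1)) => E.card) (t := Finset.range (p + 1))
      (fun E hE => Finset.mem_range.2 (Nat.lt_succ_of_le (Finset.mem_filter.1 hE).2))]
  refine Finset.sum_congr rfl fun i hi => ?_
  rw [Finset.filter_filter]
  have hpow : (Finset.univ.filter
        (fun E : Finset (Fin (2 * k + 1)) => E.card ≤ p ∧ E.card = i))
      = Finset.powersetCard i Finset.univ := by
    rw [Finset.powersetCard_eq_filter, Finset.powerset_univ]
    ext E
    simp only [Finset.mem_filter, Finset.mem_univ, true_and, and_iff_right_iff_imp]
    intro h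
    simp only [Finset.mem_range] at hi
    omega
  rw [hpow, Finset.card_powersetCard, Finset.card_univ, Fintype.card_fin]
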